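/- arXiv:2507.03259 — 7 statements merged into one kernel-verified Lean document; each statement's English description precedes it below -/
import Mathlib

section
/- If a coalition formation problem admits an effective top-partition collection, then that collection is unique. -/
/-- A partition of the agent set `N`, encoded by the map sending each agent to her coalition. -/
structure Partn (N : Type*) where
  cell : N → Set N
  mem_cell : ∀ i, i ∈ cell i
  cell_eq : ∀ i j, j ∈ cell i → cell j = cell i

/-- Coalition `C` is formed in partition `π` (i.e. `C ∈ π`). -/
def Partn.HasCoal {N : Type*} (π : Partn N) (C : Set N) : Prop := ∃ i, π.cell i = C

/-- `D(π,π')`: agents placed in different coalitions by `π` and `π'`. -/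
def Partn.diff {N : Type*} (π π' : Partn N) : Set N := {i | π.cell i ≠ π'.cell i}

/-- A coalition formation problem: a set of admissible partitions together with
complete and transitive preferences of each agent over partitions. -/
structure CFP (N : Type*) where
  adm : Set (Partn N)
  pref : N → Partn N → Partn N → Prop
  total : ∀ i, ∀ π ∈ adm, ∀ π' ∈ adm, pref i π π' ∨ pref i π' π
  trans : ∀ i π π' π'', pref i π π' → pref i π' π'' → pref i π π''

namespace CFP
variable {N : Type*}

/-- Strict preference. -/
def spref (P : CFP N) (i : N) (π π' : Partn N) : Prop := P.pref i π π' ∧ ¬ P.pref i π' π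

/-- Unrestricted domain condition: indifference only between partitions leaving
the agent in the same coalition. -/
def NoTies (P : CFP N) : Prop :=
  ∀ i, ∀ π ∈ P.adm, ∀ π' ∈ P.adm, P.pref i π π' → P.pref i π' π → π.cell i = π'.cell i

/-- Order-preserving preferences. -/
def OrderPreserving (P : CFP N) : Prop :=
  P.NoTies ∧
  ∀ i, ∀ π ∈ P.adm, ∀ π' ∈ P.adm, ∀ τ ∈ P.adm, ∀ τ' ∈ P.adm,
    π.cell i ≠ π'.cell i → P.spref i π π' →
    τ.cell i = π.cell i → τ'.cell i = π'.cell i → P.spref i τ τ'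

/-- `π` is myopically blocked by coalition `C` via `π'`. -/
def Blocks (P : CFP N) (C : Set N) (π π' : Partn N) : Prop :=
  π ∈ P.adm ∧ π' ∈ P.adm ∧ C.Nonempty ∧
  (∀ i ∈ C, P.pref i π' π) ∧
  (∃ j ∈ C, P.spref j π' π) ∧
  (∀ j, j ∉ C → (π.cell j ∩ C).Nonempty → π'.cell j = {j}) ∧
  (∀ j, π.cell j ∩ C = ∅ → π'.cell j = π.cell j)

/-- The (myopic) core. -/
def Core (P : CFP N) : Set (Partn N) :=
  {π | π ∈ P.adm ∧ ¬ ∃ C π', P.Blocks C π π'}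

/-- The set of (myopically) stable partitions. -/
def StableSet (P : CFP N) : Set (Partn N) :=
  {π | π ∈ P.adm ∧ ¬ ∃ C π', P.Blocks C π π' ∧ π'.HasCoal C}

/-- `V` is a top-partition collection: it consists exactly of the `|V|`-best
partitions of every agent, i.e. every agent strictly prefers every member of `V`
to every admissible partition outside `V`. -/
def TopCollection (P : CFP N) (V : Set (Partn N)) : Prop :=
  V.Nonempty ∧ V ⊆ P.adm ∧
  ∀ i, ∀ π ∈ V, ∀ π' ∈ P.adm, π' ∉ V → P.spref i π π'

/-- Effectiveness of a top-partition collection. -/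
def Effective (P : CFP N) (V : Set (Partn N)) : Prop :=
  ∀ π ∈ V, ∀ π' ∈ V, π ≠ π' →
    ∃ S : Set N, S.Nonempty ∧ S ⊆ π.diff π' ∧ π.HasCoal S ∧ ∀ i ∈ S, P.spref i π π'

/-- Weak effectiveness of a top-partition collection. -/
def WeakEffective (P : CFP N) (V : Set (Partn N)) : Prop :=
  ∀ π ∈ V, ∀ π' ∈ V, π ≠ π' → ∀ C : Set N,
    π'.HasCoal C →
    (∀ i ∈ C, π'.cell i = C) →
    (∀ i, i ∉ C →
      (π.cell i ∩ C = ∅ → π'.cell i = π.cell i) ∧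
      ((π.cell i ∩ C).Nonempty → π'.cell i = {i})) →
    ∃ j ∈ C, P.spref j π π'

/-- Domination: `π'` dominates `π` iff some coalition formed in `π'` blocks `π` via `π'`. -/
def Dom (P : CFP N) (π' π : Partn N) : Prop :=
  ∃ C, P.Blocks C π π' ∧ π'.HasCoal C

/-- Absorbing set for the myopic domination relation. -/
def Absorbing (P : CFP N) (A : Set (Partn N)) : Prop :=
  A.Nonempty ∧ A ⊆ P.adm ∧
  ∀ π ∈ A, ∀ π' ∈ P.adm, π' ≠ π → (Relation.TransGen P.Dom π' π ↔ π' ∈ A)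

/-- Weak-myopic blocking (condition (iii) of myopic blocking is dropped). -/
def WeakBlocks (P : CFP N) (C : Set N) (π π' : Partn N) : Prop :=
  π ∈ P.adm ∧ π' ∈ P.adm ∧ C.Nonempty ∧
  (∀ i ∈ C, P.pref i π' π) ∧
  (∃ j ∈ C, P.spref j π' π) ∧
  (∀ j, π.cell j ∩ C = ∅ → π'.cell j = π.cell j)

/-- The weak myopic core. -/
def WeakCore (P : CFP N) : Set (Partn N) :=
  {π | π ∈ P.adm ∧ ¬ ∃ C π', P.WeakBlocks C π π'}

/-- `Q` is the problem without externalities induced by the order-preserving problem `P`. -/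
def Induces (P Q : CFP N) : Prop :=
  Q.adm = P.adm ∧
  ∀ i, ∀ π ∈ P.adm, ∀ π' ∈ P.adm,
    (π.cell i = π'.cell i → Q.pref i π π' ∧ Q.pref i π' π) ∧
    (π.cell i ≠ π'.cell i → (P.spref i π π' ↔ Q.spref i π π'))

/-- Prudent blocking: every member of `C` compares `π` with her *worst* partition
placing her in `π'`'s coalition (equivalently, with all such partitions). -/
def PrudentBlocks (P : CFP N) (C : Set N) (π π' : Partn N) : Prop :=
  π ∈ P.adm ∧ π' ∈ P.adm ∧ C.Nonempty ∧
  (∀ i ∈ C, ∀ τ ∈ P.adm, τ.cell i = π'.cell i → P.pref i τ π) ∧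
  (∃ j ∈ C, ∀ τ ∈ P.adm, τ.cell j = π'.cell j → P.spref j τ π)

/-- Optimistic blocking: every member of `C` compares `π` with her *best* partition
placing her in `π'`'s coalition (equivalently, with some such partition). -/
def OptBlocks (P : CFP N) (C : Set N) (π π' : Partn N) : Prop :=
  π ∈ P.adm ∧ π' ∈ P.adm ∧ C.Nonempty ∧
  (∀ i ∈ C, ∃ τ ∈ P.adm, τ.cell i = π'.cell i ∧ P.pref i τ π) ∧
  (∃ j ∈ C, ∃ τ ∈ P.adm, τ.cell j = π'.cell j ∧ P.spref j τ π)

def PrudentDom (P : CFP N) (π' π : Partn N) : Prop :=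
  ∃ C, P.PrudentBlocks C π π' ∧ π'.HasCoal C

def OptDom (P : CFP N) (π' π : Partn N) : Prop :=
  ∃ C, P.OptBlocks C π π' ∧ π'.HasCoal C

def PrudentAbsorbing (P : CFP N) (A : Set (Partn N)) : Prop :=
  A.Nonempty ∧ A ⊆ P.adm ∧
  ∀ π ∈ A, ∀ π' ∈ P.adm, π' ≠ π → (Relation.TransGen P.PrudentDom π' π ↔ π' ∈ A)

def OptAbsorbing (P : CFP N) (A : Set (Partn N)) : Prop :=
  A.Nonempty ∧ A ⊆ P.adm ∧
  ∀ π ∈ A, ∀ π' ∈ P.adm, π' ≠ π → (Relation.TransGen P.OptDom π' π ↔ π' ∈ A)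

end CFP

lemma Partn.exists_agent_of_ne {N : Type*} {π σ : Partn N} (h : π ≠ σ) :
    ∃ i, π.cell i ≠ σ.cell i := by
  by_contra hc
  push_neg at hc
  exact h (by cases π; cases σ; simp_all [funext_iff])

lemma top_collection_subset {N : Type*} (P : CFP N)
    (V V' : Set (Partn N)) (hV : P.TopCollection V) (hVe : P.Effective V)
    (hV' : P.TopCollection V') : V ⊆ V' := by
  intro π hπ
  by_contra hπ'
  by_cases h : V' ⊆ V
  · obtain ⟨σ, hσ⟩ := hV'.1
    have hσV : σ ∈ V := h hσ
    have hne : π ≠ σ := fun e => hπ' (e ▸ hσ)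
    obtain ⟨S, hSne, _, _, hSp⟩ := hVe π hπ σ hσV hne
    obtain ⟨i, hi⟩ := hSne
    have h1 := hSp i hi
    have h2 := hV'.2.2 i σ hσ π (hV.2.1 hπ) hπ'
    exact h1.2 h2.1
  · obtain ⟨σ, hσ, hσV⟩ := Set.not_subset.mp h
    have hne : π ≠ σ := fun e => hπ' (e ▸ hσ)
    obtain ⟨i, _⟩ := Partn.exists_agent_of_ne hne
    have h1 := hV.2.2 i π hπ σ (hV'.2.1 hσ) hσV
    have h2 := hV'.2.2 i σ hσ π (hV.2.1 hπ) hπ'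
    exact h1.2 h2.1

/-- an effective top-partition collection, if it exists, is unique. -/
theorem effective_top_collection_unique {N : Type*} (P : CFP N) (hP : P.NoTies)
    (V V' : Set (Partn N)) (hV : P.TopCollection V) (hVe : P.Effective V)
    (hV' : P.TopCollection V') (hV'e : P.Effective V') : V = V' :=
  Set.Subset.antisymm (top_collection_subset P V V' hV hVe hV')
    (top_collection_subset P V' V hV' hV'e hV)
end

section
/- Let (K,≿) be a coalition formation problem with unrestricted preferences (indifference only between partitions leaving the agent in the same coalition). If there is an effective top-partition collection V, then the myopic core equals V. -/
/-- with unrestricted preferences, if there is an effective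
top-partition collection `V`, then the core equals `V`. -/
theorem core_eq_top_collection {N : Type*} (P : CFP N) (hP : P.NoTies)
    (V : Set (Partn N)) (hV : P.TopCollection V) (he : P.Effective V) :
    P.Core = V := by
  obtain ⟨hne, hsub, htop⟩ := hV
  ext π
  constructor
  · rintro ⟨hadm, hnb⟩
    by_contra hπV
    obtain ⟨π₀, hπ₀⟩ := hne
    have hN : Nonempty N := by
      by_contra h
      rw [not_nonempty_iff] at h
      apply hπV
      have heq : π = π₀ := by
        cases π; cases π₀
        simp only [Partn.mk.injEq]
        funext i; exact h.elim i
      rwa [heq]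
    obtain ⟨j⟩ := hN
    exact hnb ⟨Set.univ, π₀, hadm, hsub hπ₀, ⟨j, trivial⟩,
      fun i _ => (htop i π₀ hπ₀ π hadm hπV).1,
      ⟨j, trivial, htop j π₀ hπ₀ π hadm hπV⟩,
      fun k hk _ => absurd trivial hk,
      fun k hk =>
        (Set.eq_empty_iff_forall_notMem.mp hk k ⟨π.mem_cell k, trivial⟩).elim⟩
  · intro hπV
    refine ⟨hsub hπV, ?_⟩
    rintro ⟨C, π', hadm, hadm', hCne, hwk, ⟨j, hjC, hjs⟩, hab, hfix⟩
    by_cases hπ'V : π' ∈ V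
    · have hneq : π ≠ π' := by
        rintro rfl
        exact hjs.2 hjs.1
      obtain ⟨S, hSne, hSdiff, ⟨k, hk⟩, hstrict⟩ := he π hπV π' hπ'V hneq
      obtain ⟨i, hiS⟩ := hSne
      have hSC : ∀ m ∈ S, m ∉ C := by
        intro m hmS hmC
        exact (hstrict m hmS).2 (hwk m hmC)
      have hcelli : π.cell i = S := by
        rw [← hk] at hiS ⊢
        exact π.cell_eq k i hiS
      have hempty : π.cell i ∩ C = ∅ := by
        rw [hcelli]
        ext m
        simp only [Set.mem_inter_iff, Set.mem_empty_iff_false, iff_false, not_and]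
        exact hSC m
      exact hSdiff hiS (hfix i hempty).symm
    · exact (htop j π hπV π' hadm' hπ'V).2 hjs.1
end

section
/- Let (K,≿) be a coalition formation problem with unrestricted preferences. If there exists an effective top-partition collection, then the myopic core is nonempty. -/
/-- with unrestricted preferences, the existence of an effective
top-partition collection implies that the core is nonempty. -/
theorem core_nonempty {N : Type*} (P : CFP N) (hP : P.NoTies)
    (V : Set (Partn N)) (hV : P.TopCollection V) (he : P.Effective V) :
    P.Core.Nonempty := by
  obtain ⟨⟨π, hπV⟩, hVadm, htop⟩ := hV
  refine ⟨π, hVadm hπV, ?_⟩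
  rintro ⟨C, π', hπa, hπ'a, ⟨c, hcC⟩, hweak, ⟨j, hjC, hjs⟩, hout, hfix⟩
  by_cases hπ'V : π' ∈ V
  · -- π' ∈ V: π ≠ π', use effectiveness on (π, π')
    have hne : π ≠ π' := by
      rintro rfl
      exact hjs.2 hjs.1
    obtain ⟨S, hSne, hSdiff, ⟨k, hk⟩, hSpref⟩ := he π hπV π' hπ'V hne
    obtain ⟨i, hiS⟩ := hSne
    have hiScell : π.cell i = S := by
      rw [← hk]; exact π.cell_eq k i (hk ▸ hiS)
    have hdiff : π.cell i ≠ π'.cell i := hSdiff hiS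
    have hspref : P.spref i π π' := hSpref i hiS
    by_cases hiC : i ∈ C
    · exact hspref.2 (hweak i hiC)
    · by_cases hint : (π.cell i ∩ C) = ∅
      · exact hdiff ((hfix i hint).symm)
      · -- some member of S = π.cell i is in C, contradiction
        obtain ⟨m, hmS, hmC⟩ := Set.nonempty_iff_ne_empty.mpr hint
        have hmcell : π.cell m = π.cell i := π.cell_eq i m hmS
        have hmS' : m ∈ S := hiScell ▸ hmS
        exact (hSpref m hmS').2 (hweak m hmC)
  · -- π' ∉ V: j strictly prefers π to π', contradicting spref j π' π
    exact (htop j π hπV π' hπ'a hπ'V).2 hjs.1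
end

section
/- Let (K,≿) be a coalition formation problem with unrestricted preferences and let V be a top-partition collection. If V is weak effective, then every partition in V is myopically stable; in particular the stable set is nonempty. -/
/-- a weak effective top-partition collection is contained in the
stable set; in particular the stable set is nonempty. -/
theorem weak_effective_subset_stable {N : Type*} (P : CFP N) (hP : P.NoTies)
    (V : Set (Partn N)) (hV : P.TopCollection V) (hwe : P.WeakEffective V) :
    V ⊆ P.StableSet ∧ P.StableSet.Nonempty := by
  obtain ⟨hVne, hVadm, htop⟩ := hV
  have hsub : V ⊆ P.StableSet := by
    intro π hπ
    refine ⟨hVadm hπ, ?_⟩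
    rintro ⟨C, π', ⟨hπa, hπ'a, hCne, hall, ⟨j, hjC, hjs⟩, habd, hsame⟩, hC⟩
    by_cases hπ'V : π' ∈ V
    · -- π' ∈ V: use weak effectiveness
      have hne : π ≠ π' := by
        rintro rfl
        exact hjs.2 (by rcases P.total j π hπa π hπa with h | h <;> exact h)
      obtain ⟨i0, hi0⟩ := hC
      have hcellC : ∀ i ∈ C, π'.cell i = C := by
        intro i hiC
        have : i ∈ π'.cell i0 := hi0 ▸ hiC
        rw [π'.cell_eq i0 i this, hi0]
      obtain ⟨k, hkC, hks⟩ := hwe π hπ π' hπ'V hne C ⟨i0, hi0⟩ hcellC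
        (fun i hiC => ⟨fun h => hsame i h, fun h => habd i hiC h⟩)
      exact hks.2 (hall k hkC)
    · -- π' ∉ V: everyone strictly prefers π, contradiction
      exact (htop j π hπ π' hπ'a hπ'V).2 (hjs.1)
  exact ⟨hsub, hVne.imp fun π hπ => hsub hπ⟩
end

section
/- If preferences are order-preserving and V is a top-partition collection containing two partitions π, π' such that some coalition S satisfies S ∈ π and S = D(π,π') (the set of agents in different coalitions under π and π'), then V is not effective. -/
theorem not_effective_of_diff_coal {N : Type*} (P : CFP N) (hP : P.OrderPreserving)
    (V : Set (Partn N)) (hV : P.TopCollection V) (π π' : Partn N) (S : Set N)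
    (hπ : π ∈ V) (hπ' : π' ∈ V) (hS : π.HasCoal S) (hD : S = π.diff π') :
    ¬ P.Effective V := by
  intro hEff
  obtain ⟨j0, hj0⟩ := hS
  have hne : π ≠ π' := by
    rintro rfl
    have hj : j0 ∈ S := hj0 ▸ π.mem_cell j0
    rw [hD] at hj
    exact hj rfl
  obtain ⟨S₁, ⟨k, hk⟩, hS₁sub, ⟨k0, hk0⟩, hS₁pref⟩ := hEff π hπ π' hπ' hne
  obtain ⟨S₂, ⟨i, hi⟩, hS₂sub, _, hS₂pref⟩ := hEff π' hπ' π hπ hne.symm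
  have hiS : i ∈ S := by
    rw [hD]
    exact fun h => hS₂sub hi h.symm
  -- S₁ = S
  have hkS : k ∈ S := by
    rw [hD]; exact hS₁sub hk
  have hcellk1 : π.cell k = S₁ := by
    rw [← hk0]; exact π.cell_eq k0 k (hk0 ▸ hk)
  have hcellkS : π.cell k = S := by
    rw [← hj0]; exact π.cell_eq j0 k (hj0 ▸ hkS)
  have hS₁S : S₁ = S := hcellk1 ▸ hcellkS
  have h1 := hS₁pref i (hS₁S ▸ hiS)
  have h2 := hS₂pref i hi
  exact h1.2 h2.1
end

section
/- A coalition formation problem with order-preserving preferences and its induced problem without externalities generate the same domination relation, and hence the same absorbing sets. More generally, two associated problems with order-preserving preferences (i.e., inducing the same problem without externalities) generate the same absorbing sets. -/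
lemma Partn.ext' {N : Type*} {π π' : Partn N} (h : ∀ i, π.cell i = π'.cell i) : π = π' := by
  cases π; cases π'; congr 1; exact funext h

lemma blocks_cells_ne {N : Type*} (S : CFP N) {C : Set N} {π π' : Partn N}
    (hB : S.Blocks C π π') (hC : π'.HasCoal C) :
    ∀ i ∈ C, π.cell i ≠ π'.cell i := by
  intro i hi heq
  obtain ⟨k, hk⟩ := hC
  have hci' : π'.cell i = C := by
    rw [← hk]; exact π'.cell_eq k i (hk ▸ hi)
  have hci : π.cell i = C := heq.trans hci'
  have hpp : π = π' := by
    apply Partn.ext'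
    intro j
    by_cases hj : j ∈ C
    · have h1 : π.cell j = C := by
        rw [← hci]; exact π.cell_eq i j (hci ▸ hj)
      have h2 : π'.cell j = C := by
        rw [← hci']; exact π'.cell_eq i j (hci' ▸ hj)
      rw [h1, h2]
    · have hdisj : π.cell j ∩ C = ∅ := by
        by_contra hne
        obtain ⟨m, hm1, hm2⟩ := Set.nonempty_iff_ne_empty.mpr hne
        have hmj : π.cell m = π.cell j := π.cell_eq j m hm1
        have hmC : π.cell m = C := by
          rw [← hci]; exact π.cell_eq i m (hci ▸ hm2)
        exact hj (by rw [← hmC, hmj]; exact π.mem_cell j)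
      exact (hB.2.2.2.2.2.2 j hdisj).symm
  obtain ⟨j0, _, hs⟩ := hB.2.2.2.2.1
  rw [hpp] at hs
  exact hs.2 hs.1

lemma pref_iff_of_induces {N : Type*} {P R : CFP N} (hP : P.OrderPreserving)
    (h1 : CFP.Induces P R) {i : N} {π π' : Partn N}
    (hπ : π ∈ P.adm) (hπ' : π' ∈ P.adm) (hne : π.cell i ≠ π'.cell i) :
    P.pref i π π' ↔ R.pref i π π' := by
  have hiff := (h1.2 i π hπ π' hπ').2 hne
  have hiff' := (h1.2 i π' hπ' π hπ).2 (Ne.symm hne)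
  constructor
  · intro h
    have hs : P.spref i π π' := ⟨h, fun h' => hne (hP.1 i π hπ π' hπ' h h')⟩
    exact (hiff.mp hs).1
  · intro h
    by_contra hnp
    have hp' : P.pref i π' π := (P.total i π hπ π' hπ').resolve_left hnp
    have hs' : P.spref i π' π := ⟨hp', hnp⟩
    exact (hiff'.mp hs').2 h

lemma dom_iff_of_induces {N : Type*} {P R : CFP N} (hP : P.OrderPreserving)
    (h1 : CFP.Induces P R) (π' π : Partn N) :
    P.Dom π' π ↔ R.Dom π' π := by
  constructor
  · rintro ⟨C, hB, hC⟩
    refine ⟨C, ?_, hC⟩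
    have hne := blocks_cells_ne P hB hC
    obtain ⟨hπ, hπ', hCne, hall, ⟨j, hj, hjs⟩, h6, h7⟩ := hB
    obtain ⟨k, hk⟩ := hC
    refine ⟨h1.1 ▸ hπ, h1.1 ▸ hπ', hCne, ?_, ⟨j, hj, ?_⟩, h6, h7⟩
    · intro i hi
      exact (pref_iff_of_induces hP h1 hπ' hπ (fun h => hne i hi h.symm)).mp (hall i hi)
    · exact ((h1.2 j π' hπ' π hπ).2 (fun h => hne j hj h.symm)).mp hjs
  · rintro ⟨C, hB, hC⟩
    refine ⟨C, ?_, hC⟩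
    have hne := blocks_cells_ne R hB hC
    obtain ⟨hπ, hπ', hCne, hall, ⟨j, hj, hjs⟩, h6, h7⟩ := hB
    rw [h1.1] at hπ hπ'
    refine ⟨hπ, hπ', hCne, ?_, ⟨j, hj, ?_⟩, h6, h7⟩
    · intro i hi
      exact (pref_iff_of_induces hP h1 hπ' hπ (fun h => hne i hi h.symm)).mpr (hall i hi)
    · exact ((h1.2 j π' hπ' π hπ).2 (fun h => hne j hj h.symm)).mpr hjs

lemma absorbing_iff_of_induces {N : Type*} {P R : CFP N} (hP : P.OrderPreserving)
    (h1 : CFP.Induces P R) (A : Set (Partn N)) :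
    P.Absorbing A ↔ R.Absorbing A := by
  have hdom : P.Dom = R.Dom := by
    funext π' π
    exact propext (dom_iff_of_induces hP h1 π' π)
  unfold CFP.Absorbing
  rw [hdom, h1.1]

theorem associated_same_absorbing {N : Type*} (P P' R : CFP N)
    (hP : P.OrderPreserving) (hP' : P'.OrderPreserving)
    (h1 : CFP.Induces P R) (h2 : CFP.Induces P' R) :
    (∀ π π' : Partn N, P.Dom π' π ↔ R.Dom π' π) ∧
    (∀ A : Set (Partn N), P.Absorbing A ↔ R.Absorbing A) ∧
    (∀ A : Set (Partn N), P.Absorbing A ↔ P'.Absorbing A) := by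
  refine ⟨fun π π' => dom_iff_of_induces hP h1 π' π, absorbing_iff_of_induces hP h1, fun A => ?_⟩
  rw [absorbing_iff_of_induces hP h1 A, absorbing_iff_of_induces hP' h2 A]
end

section
/- Let (K,≿) be a coalition formation problem with unrestricted preferences. If there is an effective top-partition collection V, then the weak myopic core equals V. -/
theorem weakCore_eq_top_collection {N : Type*} (P : CFP N) (hP : P.NoTies)
    (V : Set (Partn N)) (hV : P.TopCollection V) (he : P.Effective V) :
    P.WeakCore = V := by
  obtain ⟨⟨π₀, hπ₀⟩, hVadm, htop⟩ := hV
  ext π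
  constructor
  · rintro ⟨hadm, hnb⟩
    by_contra hπV
    by_cases hN : Nonempty N
    · obtain ⟨j⟩ := hN
      refine hnb ⟨Set.univ, π₀, hadm, hVadm hπ₀, ⟨j, trivial⟩,
        fun i _ => (htop i π₀ hπ₀ π hadm hπV).1,
        ⟨j, trivial, htop j π₀ hπ₀ π hadm hπV⟩,
        fun k hk => absurd hk ?_⟩
      rw [Set.inter_univ]
      exact Set.Nonempty.ne_empty ⟨k, π.mem_cell k⟩
    · have hpe : π = π₀ := by
        cases π; cases π₀
        simp only [Partn.mk.injEq]
        funext i; exact absurd ⟨i⟩ hN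
      exact hπV (hpe ▸ hπ₀)
  · intro hπ
    refine ⟨hVadm hπ, ?_⟩
    rintro ⟨C, π', hadm, hadm', ⟨c, hc⟩, hall, ⟨j, hjC, hj⟩, hfix⟩
    by_cases hπ'V : π' ∈ V
    · by_cases heq : π' = π
      · exact hj.2 (heq ▸ hj.1)
      · obtain ⟨S, ⟨s, hs⟩, hSdiff, ⟨k, hk⟩, hS⟩ := he π hπ π' hπ'V (Ne.symm heq)
        have hcell : π.cell s = S := by
          rw [← hk]; exact π.cell_eq k s (hk ▸ hs)
        have hdisj : π.cell s ∩ C = ∅ := by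
          rw [hcell]
          ext x
          simp only [Set.mem_inter_iff, Set.mem_empty_iff_false, iff_false, not_and]
          exact fun hxS hxC => (hS x hxS).2 (hall x hxC)
        exact hSdiff hs (hfix s hdisj).symm
    · exact (htop c π hπ π' hadm' hπ'V).2 (hall c hc)
end
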